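/- arXiv:2501.16956 — 3 statements merged into one kernel-verified Lean document; each statement's English description precedes it below -/
import Mathlib

section
/- Let n be a positive integer and δ ∈ (0,1). Let X_1, …, X_n be independent random variables with X_i Gaussian of mean θ and variance σ_i², where 0 < σ_1 ≤ σ_2 ≤ … ≤ σ_n, and suppose σ_1 > (2√2/0.35)·√(n·log(2/δ)) / (Σ_{i=1}^n σ_i^{-1}). Then with probability at least 1 − δ, |med(X_1,…,X_n) − θ| ≤ (√2/0.35)·√(n·log(2/δ)) / (Σ_{i=1}^n σ_i^{-1}). -/
open MeasureTheory ProbabilityTheory Real Finset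

/-- The empirical median of `x 0, …, x (n-1)`: the `⌈n/2⌉`-th largest value.
Equivalently, `empMed x ≥ t` if and only if at least `n/2` of the values satisfy `x i ≥ t`. -/
noncomputable def empMed {n : ℕ} (x : Fin n → ℝ) : ℝ :=
  sSup {t : ℝ | (n : ℝ) / 2 ≤ (Finset.univ.filter fun i => t ≤ x i).card}

section XiaAux

lemma num1 : (0.35:ℝ) * Real.sqrt (2*π) * rexp (1/8) ≤ 1 := by
  have hπ : π ≤ 3.1416 := by linarith [Real.pi_lt_d6]
  have h1 : Real.sqrt (2*π) ≤ 2.5067 := by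
    rw [show (2.5067:ℝ) = Real.sqrt (2.5067^2) by rw [Real.sqrt_sq]; norm_num]
    apply Real.sqrt_le_sqrt; nlinarith
  have h2 : rexp (1/8) ≤ 1.13325 := by
    have := Real.exp_bound' (x := 1/8) (by norm_num) (by norm_num) (n := 3) (by norm_num)
    simp [Finset.sum_range_succ, Nat.factorial] at this
    norm_num at this ⊢
    linarith
  have h0 : (0:ℝ) ≤ Real.sqrt (2*π) := Real.sqrt_nonneg _
  nlinarith [Real.exp_pos (1/8:ℝ)]

lemma pdf_ge {σ x : ℝ} (hσ : 0 < σ) (hx0 : 0 ≤ x) (hx : x ≤ σ/2) :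
    0.35 / σ ≤ gaussianPDFReal 0 (Real.toNNReal (σ^2)) x := by
  rw [gaussianPDFReal]
  have hv : ((Real.toNNReal (σ^2) : NNReal) : ℝ) = σ^2 := Real.coe_toNNReal _ (sq_nonneg σ)
  rw [hv]
  have h2πσ : Real.sqrt (2*π*σ^2) = Real.sqrt (2*π) * σ := by
    rw [Real.sqrt_mul (by positivity), Real.sqrt_sq hσ.le]
  rw [h2πσ]
  have hexp : rexp (-(1/8)) ≤ rexp (-(x-0)^2 / (2*σ^2)) := by
    apply Real.exp_le_exp.2
    rw [neg_div, neg_le_neg_iff, div_le_div_iff₀ (by positivity) (by norm_num)]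
    nlinarith
  have hpos : (0:ℝ) < Real.sqrt (2*π) := Real.sqrt_pos.2 (by positivity)
  rw [div_le_iff₀ hσ] at *
  calc (0.35:ℝ) ≤ (Real.sqrt (2*π))⁻¹ * rexp (-(1/8)) := by
        rw [Real.exp_neg]
        have hh : (0.35:ℝ) * (Real.sqrt (2*π) * rexp (1/8)) ≤ 1 := by linarith [num1]
        calc (0.35:ℝ) = 0.35 * (Real.sqrt (2*π) * rexp (1/8)) * ((Real.sqrt (2*π))⁻¹ * (rexp (1/8))⁻¹) := by
              field_simp
          _ ≤ 1 * ((Real.sqrt (2*π))⁻¹ * (rexp (1/8))⁻¹) := by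
              apply mul_le_mul_of_nonneg_right hh; positivity
          _ = (Real.sqrt (2*π))⁻¹ * (rexp (1/8))⁻¹ := by ring
    _ ≤ (Real.sqrt (2*π))⁻¹ * rexp (-(x-0)^2 / (2*σ^2)) := by
        apply mul_le_mul_of_nonneg_left hexp (by positivity)
    _ = (Real.sqrt (2*π) * σ)⁻¹ * rexp (-(x-0)^2 / (2*σ^2)) * σ := by
        field_simp

lemma gauss_toReal {v : NNReal} (hv : v ≠ 0) (s : Set ℝ) :
    (gaussianReal 0 v s).toReal = ∫ x in s, gaussianPDFReal 0 v x := by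
  rw [gaussianReal_apply_eq_integral _ hv s, ENNReal.toReal_ofReal]
  exact integral_nonneg (fun x => gaussianPDFReal_nonneg _ _ _)

lemma gauss_half {v : NNReal} (hv : v ≠ 0) :
    (gaussianReal 0 v (Set.Ici 0)).toReal = 1/2 := by
  have hint : Integrable (gaussianPDFReal 0 v) := integrable_gaussianPDFReal 0 v
  have heven : ∀ x, gaussianPDFReal 0 v (-x) = gaussianPDFReal 0 v x := by
    intro x; simp [gaussianPDFReal, neg_sq]
  have hsym : ∫ x in Set.Iic (0:ℝ), gaussianPDFReal 0 v x
      = ∫ x in Set.Ioi (0:ℝ), gaussianPDFReal 0 v x := by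
    have := integral_comp_neg_Iic (0:ℝ) (gaussianPDFReal 0 v)
    simp only [heven, neg_zero] at this
    rw [this]
  have htot : (∫ x in Set.Iic (0:ℝ), gaussianPDFReal 0 v x)
      + ∫ x in Set.Ioi (0:ℝ), gaussianPDFReal 0 v x = 1 := by
    rw [← integral_gaussianPDFReal_eq_one 0 hv, ← integral_add_compl measurableSet_Iic hint,
      Set.compl_Iic]
  rw [gauss_toReal hv, integral_Ici_eq_integral_Ioi]
  linarith

lemma gauss_tail {σ t : ℝ} (hσ : 0 < σ) (ht : 0 ≤ t) (ht2 : t ≤ σ/2) :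
    ((gaussianReal (0:ℝ) (Real.toNNReal (σ^2))) (Set.Ici t)).toReal
      ≤ 1/2 - 0.35 * t / σ := by
  have hv : Real.toNNReal (σ^2) ≠ 0 := by
    simp [Real.toNNReal_eq_zero, not_le]; positivity
  have hint : Integrable (gaussianPDFReal 0 (Real.toNNReal (σ^2))) :=
    integrable_gaussianPDFReal _ _
  have hsplit : (gaussianReal 0 (Real.toNNReal (σ^2)) (Set.Ici 0)).toReal
      = (∫ x in Set.Ico (0:ℝ) t, gaussianPDFReal 0 (Real.toNNReal (σ^2)) x)
        + (gaussianReal 0 (Real.toNNReal (σ^2)) (Set.Ici t)).toReal := by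
    rw [gauss_toReal hv, gauss_toReal hv, ← Set.Ico_union_Ici_eq_Ici ht]
    exact setIntegral_union (Set.disjoint_left.2 fun a ha ha' => absurd ha' (not_le.2 ha.2))
      measurableSet_Ici hint.integrableOn hint.integrableOn
  have hlow : 0.35 * t / σ ≤ ∫ x in Set.Ico (0:ℝ) t, gaussianPDFReal 0 (Real.toNNReal (σ^2)) x := by
    have : ∫ x in Set.Ico (0:ℝ) t, (0.35/σ) ≤
        ∫ x in Set.Ico (0:ℝ) t, gaussianPDFReal 0 (Real.toNNReal (σ^2)) x := by
      apply setIntegral_mono_on (integrableOn_const (by simp) (by simp))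
        hint.integrableOn measurableSet_Ico
      intro x hx
      exact pdf_ge hσ hx.1 (le_trans hx.2.le ht2)
    rw [setIntegral_const] at this
    simpa [Real.volume_Ico, max_eq_left ht, ENNReal.toReal_ofReal ht, smul_eq_mul, mul_comm,
      mul_div_assoc] using this
  have := gauss_half hv
  linarith

lemma chernoff_indicator {Ω : Type*} [MeasurableSpace Ω] (μ : Measure Ω) [IsProbabilityMeasure μ]
    {n : ℕ} (Y : Fin n → Ω → ℝ) (hY : ∀ i, Measurable (Y i))
    (hind : iIndepFun Y μ)
    (hval : ∀ i ω, Y i ω = 0 ∨ Y i ω = 1)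
    (l : ℝ) (hl : 0 ≤ l) :
    (μ {ω | (n:ℝ)/2 ≤ ∑ i, Y i ω}).toReal ≤
      rexp (-l * ((n:ℝ)/2)) * rexp ((rexp l - 1) * ∑ i, ∫ ω, Y i ω ∂μ) := by
  have hYbd : ∀ i ω, Y i ω ≤ 1 := fun i ω => by rcases hval i ω with h|h <;> simp [h]
  have hY0 : ∀ i ω, 0 ≤ Y i ω := fun i ω => by rcases hval i ω with h|h <;> simp [h]
  have hYint : ∀ i, Integrable (Y i) μ := fun i =>
    Integrable.mono' (integrable_const 1) (hY i).aestronglyMeasurable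
      (ae_of_all _ fun ω => by rw [Real.norm_eq_abs, abs_of_nonneg (hY0 i ω)]; exact hYbd i ω)
  have hexp_eq : ∀ i ω, rexp (l * Y i ω) = 1 + (rexp l - 1) * Y i ω := by
    intro i ω; rcases hval i ω with h|h <;> simp [h]
  have hmgf : ∀ i, mgf (Y i) μ l = 1 + (rexp l - 1) * ∫ ω, Y i ω ∂μ := by
    intro i
    rw [mgf, integral_congr_ae (ae_of_all _ fun ω => hexp_eq i ω),
      integral_add (integrable_const 1) ((hYint i).const_mul _),
      integral_const, integral_const_mul]
    simp
  have h_int : ∀ i, Integrable (fun ω => rexp (l * Y i ω)) μ := fun i =>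
    ((integrable_const (1:ℝ)).add ((hYint i).const_mul _)).congr
      (ae_of_all _ fun ω => (hexp_eq i ω).symm)
  have hsum_eq : (fun ω => ∑ i, Y i ω) = ∑ i, Y i := by
    funext ω; rw [Finset.sum_apply]
  have h_int_sum : Integrable (fun ω => rexp (l * ∑ i, Y i ω)) μ := by
    refine Integrable.mono' (integrable_const (rexp (l * n)))
      (by measurability) (ae_of_all _ fun ω => ?_)
    rw [Real.norm_eq_abs, abs_of_nonneg (Real.exp_nonneg _), Real.exp_le_exp]
    have : ∑ i, Y i ω ≤ (n:ℝ) := by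
      calc ∑ i, Y i ω ≤ ∑ _i : Fin n, (1:ℝ) := Finset.sum_le_sum fun i _ => hYbd i _
        _ = n := by simp
    exact mul_le_mul_of_nonneg_left this hl
  have hch := measure_ge_le_exp_mul_mgf (μ := μ) (X := fun ω => ∑ i, Y i ω)
    ((n:ℝ)/2) hl h_int_sum
  refine hch.trans ?_
  have hmgfsum : mgf (fun ω => ∑ i, Y i ω) μ l = ∏ i, mgf (Y i) μ l := by
    rw [hsum_eq]; exact hind.mgf_sum hY Finset.univ
  have hprod : ∏ i, mgf (Y i) μ l ≤ rexp ((rexp l - 1) * ∑ i, ∫ ω, Y i ω ∂μ) := by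
    rw [Finset.mul_sum, Real.exp_sum]
    refine Finset.prod_le_prod (fun i _ => ?_) (fun i _ => ?_)
    · exact mgf_nonneg
    · rw [hmgf i]
      calc 1 + (rexp l - 1) * ∫ ω, Y i ω ∂μ
          = (rexp l - 1) * (∫ ω, Y i ω ∂μ) + 1 := by ring
        _ ≤ rexp ((rexp l - 1) * ∫ ω, Y i ω ∂μ) := Real.add_one_le_exp _
  rw [hmgfsum]
  exact mul_le_mul_of_nonneg_left hprod (Real.exp_nonneg _)


lemma empMed_close {n : ℕ} (hn : 0 < n) (x : Fin n → ℝ) (θ t : ℝ) (ht : 0 ≤ t)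
    (hup : ((Finset.univ.filter fun i => θ + t ≤ x i).card : ℝ) < (n:ℝ)/2)
    (hlo : ((Finset.univ.filter fun i => x i ≤ θ - t).card : ℝ) < (n:ℝ)/2) :
    |empMed x - θ| ≤ t := by
  haveI : Nonempty (Fin n) := ⟨⟨0, hn⟩⟩
  set T : Set ℝ := {s : ℝ | (n : ℝ) / 2 ≤ (Finset.univ.filter fun i => s ≤ x i).card} with hT
  have himg : (Finset.univ.image x).Nonempty := (Finset.univ_nonempty).image x
  set m := (Finset.univ.image x).min' himg with hm
  have hmT : m ∈ T := by
    have : (Finset.univ.filter fun i => m ≤ x i) = Finset.univ := by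
      apply Finset.filter_true_of_mem
      intro i _
      exact Finset.min'_le _ _ (Finset.mem_image_of_mem x (Finset.mem_univ i))
    simp only [hT, Set.mem_setOf_eq, this, Finset.card_univ, Fintype.card_fin]
    have : (0:ℝ) ≤ n := Nat.cast_nonneg n
    linarith
  have hbdd : BddAbove T := by
    refine ⟨(Finset.univ.image x).max' himg, fun s hs => ?_⟩
    have hcard : 0 < (Finset.univ.filter fun i => s ≤ x i).card := by
      by_contra h
      push_neg at h
      interval_cases h' : (Finset.univ.filter fun i => s ≤ x i).card
      · rw [hT] at hs
        simp only [Set.mem_setOf_eq, h'] at hs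
        push_cast at hs
        have : (0:ℝ) < n := by exact_mod_cast hn
        linarith
    obtain ⟨i, hi⟩ := Finset.card_pos.1 hcard
    rw [Finset.mem_filter] at hi
    exact hi.2.trans (Finset.le_max' _ _ (Finset.mem_image_of_mem x (Finset.mem_univ i)))
  have hup' : empMed x ≤ θ + t := by
    apply csSup_le ⟨m, hmT⟩
    intro s hs
    by_contra h
    push_neg at h
    have hsub : (Finset.univ.filter fun i => s ≤ x i) ⊆
        (Finset.univ.filter fun i => θ + t ≤ x i) :=
      Finset.monotone_filter_right _ fun i _ hi => le_trans h.le hi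
    have := Finset.card_le_card hsub
    rw [hT] at hs
    simp only [Set.mem_setOf_eq] at hs
    have : ((Finset.univ.filter fun i => s ≤ x i).card : ℝ) ≤
        ((Finset.univ.filter fun i => θ + t ≤ x i).card : ℝ) := by exact_mod_cast this
    linarith
  have hlo' : θ - t ≤ empMed x := by
    apply le_csSup hbdd
    rw [hT]
    simp only [Set.mem_setOf_eq]
    have hsplit := Finset.card_filter_add_card_filter_not
      (s := (Finset.univ : Finset (Fin n))) (p := fun i => x i ≤ θ - t)
    have hsub : (Finset.univ.filter fun i => ¬ (x i ≤ θ - t)) ⊆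
        (Finset.univ.filter fun i => θ - t ≤ x i) :=
      Finset.monotone_filter_right _ fun i _ hi => (not_le.1 hi).le
    have hc := Finset.card_le_card hsub
    rw [Finset.card_univ, Fintype.card_fin] at hsplit
    have h1 : ((Finset.univ.filter fun i => x i ≤ θ - t).card : ℝ)
        + ((Finset.univ.filter fun i => ¬ (x i ≤ θ - t)).card : ℝ) = n := by
      exact_mod_cast hsplit
    have h2 : ((Finset.univ.filter fun i => ¬ (x i ≤ θ - t)).card : ℝ) ≤
        ((Finset.univ.filter fun i => θ - t ≤ x i).card : ℝ) := by exact_mod_cast hc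
    linarith
  rw [abs_le]
  constructor <;> [linarith; linarith]

variable {v : NNReal}

lemma gauss_shift_Ici (θ c : ℝ) :
    gaussianReal θ v (Set.Ici (θ + c)) = gaussianReal 0 v (Set.Ici c) := by
  have h := gaussianReal_map_add_const (μ := (0:ℝ)) (v := v) θ
  rw [zero_add] at h
  rw [← h, Measure.map_apply (measurable_add_const θ) measurableSet_Ici]
  congr 1
  ext x
  simp only [Set.mem_preimage, Set.mem_Ici]
  constructor <;> intro h' <;> linarith

lemma gauss_shift_Iic (θ c : ℝ) :
    gaussianReal θ v (Set.Iic (θ + c)) = gaussianReal 0 v (Set.Iic c) := by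
  have h := gaussianReal_map_add_const (μ := (0:ℝ)) (v := v) θ
  rw [zero_add] at h
  rw [← h, Measure.map_apply (measurable_add_const θ) measurableSet_Iic]
  congr 1
  ext x
  simp only [Set.mem_preimage, Set.mem_Iic]
  constructor <;> intro h' <;> linarith

lemma gauss_neg (c : ℝ) :
    gaussianReal (0:ℝ) v (Set.Iic (-c)) = gaussianReal 0 v (Set.Ici c) := by
  have h := gaussianReal_map_const_mul (μ := (0:ℝ)) (v := v) (-1)
  replace h : Measure.map (fun x : ℝ => -1 * x) (gaussianReal 0 v) = gaussianReal 0 v := by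
    rw [h, mul_zero]; congr 1; ext; simp
  rw [← h, Measure.map_apply (measurable_const_mul _) measurableSet_Ici]
  congr 1
  ext x
  simp only [Set.mem_preimage, Set.mem_Ici, Set.mem_Iic]
  constructor <;> intro h' <;> linarith
end XiaAux

set_option maxHeartbeats 1000000 in
/-- **Proposition 1 (Xia's bound).**
If `X_1, …, X_n` are independent with `X_i ~ N(θ, σ_i²)`, `0 < σ_1 ≤ … ≤ σ_n`,
`δ ∈ (0,1)` and `σ_1 > (2√2/0.35) √(n log(2/δ)) / ∑_{i=1}^n σ_i⁻¹`, then with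
probability at least `1 - δ`,
`|med(X_1,…,X_n) - θ| ≤ (√2/0.35) √(n log(2/δ)) / ∑_{i=1}^n σ_i⁻¹`. -/
theorem xia_empirical_median_bound
    {Ω : Type*} [MeasurableSpace Ω] (μ : Measure Ω) [IsProbabilityMeasure μ]
    (n : ℕ) (hn : 0 < n)
    (δ : ℝ) (hδ0 : 0 < δ) (hδ1 : δ < 1)
    (θ : ℝ) (σ : Fin n → ℝ) (hσpos : ∀ i, 0 < σ i) (hσmono : Monotone σ)
    (hσ1 : 2 * Real.sqrt 2 / 0.35 * Real.sqrt (n * Real.log (2 / δ)) / ∑ i, (σ i)⁻¹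
      < σ ⟨0, hn⟩)
    (X : Fin n → Ω → ℝ) (hmeas : ∀ i, Measurable (X i))
    (hindep : iIndepFun X μ)
    (hgauss : ∀ i, Measure.map (X i) μ = gaussianReal θ (Real.toNNReal ((σ i) ^ 2))) :
    1 - δ ≤ (μ {ω |
      |empMed (fun i => X i ω) - θ| ≤
        Real.sqrt 2 / 0.35 * Real.sqrt (n * Real.log (2 / δ)) / ∑ i, (σ i)⁻¹}).toReal := by
  classical
  set L := Real.log (2 / δ) with hLdef
  set S := ∑ i, (σ i)⁻¹ with hSdef
  set t := Real.sqrt 2 / 0.35 * Real.sqrt (↑n * L) / S with htdef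
  -- basic positivity
  have hL0 : 0 < L := Real.log_pos (by rw [lt_div_iff₀ hδ0]; linarith)
  have hn0 : (0:ℝ) < n := by exact_mod_cast hn
  have hS0 : 0 < S := Finset.sum_pos (fun i _ => inv_pos.2 (hσpos i)) ⟨⟨0, hn⟩, Finset.mem_univ _⟩
  have hsq0 : 0 < Real.sqrt (↑n * L) := Real.sqrt_pos.2 (by positivity)
  have ht0 : 0 < t := by rw [htdef]; positivity
  -- t is small compared to all σ i
  have hσ1' : 2 * t < σ ⟨0, hn⟩ := by
    have heq : 2 * Real.sqrt 2 / 0.35 * Real.sqrt (↑n * L) / S = 2 * t := by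
      rw [htdef]; ring
    rw [heq] at hσ1; exact hσ1
  have htσ : ∀ i, t ≤ σ i / 2 := by
    intro i
    have h0i : σ ⟨0, hn⟩ ≤ σ i := hσmono (by simp [Fin.le_def])
    linarith
  -- σ₁ * S ≤ n
  have hσS : σ ⟨0, hn⟩ * S ≤ n := by
    rw [hSdef, Finset.mul_sum]
    calc ∑ i, σ ⟨0, hn⟩ * (σ i)⁻¹ ≤ ∑ _i : Fin n, (1:ℝ) := by
          refine Finset.sum_le_sum fun i _ => ?_
          rw [mul_inv_le_iff₀ (hσpos i), one_mul]
          exact hσmono (by simp [Fin.le_def])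
      _ = n := by simp
  -- the exponent quantities
  set a := 0.35 * t * S with hadef
  have ha0 : 0 < a := by positivity
  have ha_eq : a = Real.sqrt 2 * Real.sqrt (↑n * L) := by
    rw [hadef, htdef]; field_simp
  have ha_sq : a ^ 2 = 2 * (↑n * L) := by
    rw [ha_eq, mul_pow, Real.sq_sqrt (by norm_num : (0:ℝ) ≤ 2),
      Real.sq_sqrt (by positivity)]
  have han : a ≤ (n:ℝ) / 2 := by
    have h1 : 2 * t * S < σ ⟨0, hn⟩ * S :=
      mul_lt_mul_of_pos_right hσ1' hS0
    nlinarith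
  set l := a / n with hldef
  have hl0 : 0 ≤ l := by positivity
  have hl1 : l ≤ 1 := by
    rw [hldef, div_le_one hn0]; linarith
  -- the common exponential bound
  have hexp_bound : rexp (-l * ((n:ℝ)/2)) * rexp ((rexp l - 1) * ((n:ℝ)/2 - a)) ≤ δ / 2 := by
    rw [← Real.exp_add]
    have hel : rexp l ≤ 1 + l + l ^ 2 := by
      have := Real.exp_bound' hl0 hl1 (n := 2) (by norm_num)
      simp [Finset.sum_range_succ, Nat.factorial] at this
      nlinarith
    have hexple : -l * ((n:ℝ)/2) + (rexp l - 1) * ((n:ℝ)/2 - a) ≤ -L := by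
      have hna : 0 ≤ (n:ℝ)/2 - a := by linarith
      have h1 : (rexp l - 1) * ((n:ℝ)/2 - a) ≤ (l + l^2) * ((n:ℝ)/2 - a) :=
        mul_le_mul_of_nonneg_right (by nlinarith) hna
      have e1 : l * a = 2 * L := by
        have h : l * a * n = (2 * L) * n := by
          rw [hldef]
          field_simp
          nlinarith [ha_sq]
        exact mul_right_cancel₀ (ne_of_gt hn0) h
      have e2 : l^2 * ((n:ℝ)/2) = L := by
        have h : l^2 * ((n:ℝ)/2) * n = L * n := by
          rw [hldef]
          field_simp
          nlinarith [ha_sq]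
        exact mul_right_cancel₀ (ne_of_gt hn0) h
      have e3 : 0 ≤ l^2 * a := by positivity
      have hexpand : (l + l^2) * ((n:ℝ)/2 - a)
          = l * ((n:ℝ)/2) - l*a + l^2*((n:ℝ)/2) - l^2*a := by ring
      linarith
    calc rexp (-l * ((n:ℝ)/2) + (rexp l - 1) * ((n:ℝ)/2 - a)) ≤ rexp (-L) :=
          Real.exp_le_exp.2 hexple
      _ = δ / 2 := by
          rw [hLdef, ← Real.log_inv, Real.exp_log (by positivity)]
          rw [inv_div]
  -- indicator variables
  set Yu : Fin n → Ω → ℝ := fun i ω => if θ + t ≤ X i ω then 1 else 0 with hYudef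
  set Yl : Fin n → Ω → ℝ := fun i ω => if X i ω ≤ θ - t then 1 else 0 with hYldef
  have hfu_meas : Measurable (fun y : ℝ => if θ + t ≤ y then (1:ℝ) else 0) :=
    Measurable.ite (measurableSet_le measurable_const measurable_id) measurable_const
      measurable_const
  have hfl_meas : Measurable (fun y : ℝ => if y ≤ θ - t then (1:ℝ) else 0) :=
    Measurable.ite (measurableSet_le measurable_id measurable_const) measurable_const
      measurable_const
  have hYu_meas : ∀ i, Measurable (Yu i) := fun i => hfu_meas.comp (hmeas i)
  have hYl_meas : ∀ i, Measurable (Yl i) := fun i => hfl_meas.comp (hmeas i)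
  have hYu_indep : iIndepFun Yu μ :=
    hindep.comp (fun _ => fun y : ℝ => if θ + t ≤ y then (1:ℝ) else 0) (fun _ => hfu_meas)
  have hYl_indep : iIndepFun Yl μ :=
    hindep.comp (fun _ => fun y : ℝ => if y ≤ θ - t then (1:ℝ) else 0) (fun _ => hfl_meas)
  have hYu_val : ∀ i ω, Yu i ω = 0 ∨ Yu i ω = 1 := fun i ω => by
    by_cases h : θ + t ≤ X i ω <;> simp [hYudef, h]
  have hYl_val : ∀ i ω, Yl i ω = 0 ∨ Yl i ω = 1 := fun i ω => by
    by_cases h : X i ω ≤ θ - t <;> simp [hYldef, h]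
  -- variance facts
  have hv_ne : ∀ i, Real.toNNReal ((σ i) ^ 2) ≠ 0 := by
    intro i
    simp only [ne_eq, Real.toNNReal_eq_zero, not_le]
    exact pow_pos (hσpos i) 2
  -- tail probabilities
  have hintu : ∀ i, ∫ ω, Yu i ω ∂μ ≤ 1/2 - 0.35 * t * (σ i)⁻¹ := by
    intro i
    have hset : MeasurableSet {ω | θ + t ≤ X i ω} := measurableSet_le measurable_const (hmeas i)
    have h1 : ∫ ω, Yu i ω ∂μ = (μ {ω | θ + t ≤ X i ω}).toReal := by
      rw [show Yu i = Set.indicator {ω | θ + t ≤ X i ω} (1 : Ω → ℝ) by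
        funext ω; rw [Set.indicator_apply]; rfl]
      exact integral_indicator_one hset
    have h2 : μ {ω | θ + t ≤ X i ω} = gaussianReal 0 (Real.toNNReal ((σ i) ^ 2)) (Set.Ici t) := by
      have : {ω | θ + t ≤ X i ω} = X i ⁻¹' Set.Ici (θ + t) := rfl
      rw [this, ← Measure.map_apply (hmeas i) measurableSet_Ici, hgauss i, gauss_shift_Ici]
    rw [h1, h2, show (0.35 : ℝ) * t * (σ i)⁻¹ = 0.35 * t / σ i from (div_eq_mul_inv _ _).symm]
    exact gauss_tail (hσpos i) ht0.le (htσ i)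
  have hintl : ∀ i, ∫ ω, Yl i ω ∂μ ≤ 1/2 - 0.35 * t * (σ i)⁻¹ := by
    intro i
    have hset : MeasurableSet {ω | X i ω ≤ θ - t} := measurableSet_le (hmeas i) measurable_const
    have h1 : ∫ ω, Yl i ω ∂μ = (μ {ω | X i ω ≤ θ - t}).toReal := by
      rw [show Yl i = Set.indicator {ω | X i ω ≤ θ - t} (1 : Ω → ℝ) by
        funext ω; rw [Set.indicator_apply]; rfl]
      exact integral_indicator_one hset
    have h2 : μ {ω | X i ω ≤ θ - t} = gaussianReal 0 (Real.toNNReal ((σ i) ^ 2)) (Set.Ici t) := by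
      have he : {ω | X i ω ≤ θ - t} = X i ⁻¹' Set.Iic (θ - t) := rfl
      rw [he, ← Measure.map_apply (hmeas i) measurableSet_Iic, hgauss i,
        show θ - t = θ + (-t) by ring, gauss_shift_Iic, gauss_neg]
    rw [h1, h2, show (0.35 : ℝ) * t * (σ i)⁻¹ = 0.35 * t / σ i from (div_eq_mul_inv _ _).symm]
    exact gauss_tail (hσpos i) ht0.le (htσ i)
  -- sums of expectations
  have hsumu : ∑ i, ∫ ω, Yu i ω ∂μ ≤ (n:ℝ)/2 - a := by
    calc ∑ i, ∫ ω, Yu i ω ∂μ ≤ ∑ i, (1/2 - 0.35 * t * (σ i)⁻¹) :=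
          Finset.sum_le_sum fun i _ => hintu i
      _ = (n:ℝ)/2 - a := by
          rw [Finset.sum_sub_distrib, hadef, hSdef]
          simp [Finset.mul_sum, mul_assoc]
          ring
  have hsuml : ∑ i, ∫ ω, Yl i ω ∂μ ≤ (n:ℝ)/2 - a := by
    calc ∑ i, ∫ ω, Yl i ω ∂μ ≤ ∑ i, (1/2 - 0.35 * t * (σ i)⁻¹) :=
          Finset.sum_le_sum fun i _ => hintl i
      _ = (n:ℝ)/2 - a := by
          rw [Finset.sum_sub_distrib, hadef, hSdef]
          simp [Finset.mul_sum, mul_assoc]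
          ring
  -- Chernoff bounds
  have hchain : ∀ (Y : Fin n → Ω → ℝ), (∀ i, Measurable (Y i)) →
      iIndepFun Y μ →
      (∀ i ω, Y i ω = 0 ∨ Y i ω = 1) →
      (∑ i, ∫ ω, Y i ω ∂μ ≤ (n:ℝ)/2 - a) →
      (μ {ω | (n:ℝ)/2 ≤ ∑ i, Y i ω}).toReal ≤ δ / 2 := by
    intro Y hYm hYi hYv hYs
    calc (μ {ω | (n:ℝ)/2 ≤ ∑ i, Y i ω}).toReal
        ≤ rexp (-l * ((n:ℝ)/2)) * rexp ((rexp l - 1) * ∑ i, ∫ ω, Y i ω ∂μ) :=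
          chernoff_indicator μ Y hYm hYi hYv l hl0
      _ ≤ rexp (-l * ((n:ℝ)/2)) * rexp ((rexp l - 1) * ((n:ℝ)/2 - a)) := by
          apply mul_le_mul_of_nonneg_left _ (Real.exp_nonneg _)
          apply Real.exp_le_exp.2
          apply mul_le_mul_of_nonneg_left hYs
          have := Real.add_one_le_exp l
          linarith [Real.one_le_exp hl0]
      _ ≤ δ / 2 := hexp_bound
  have hAu := hchain Yu hYu_meas hYu_indep hYu_val hsumu
  have hAl := hchain Yl hYl_meas hYl_indep hYl_val hsuml
  -- the bad events
  set A : Set Ω := {ω | (n:ℝ)/2 ≤ ∑ i, Yu i ω} with hAdef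
  set B : Set Ω := {ω | (n:ℝ)/2 ≤ ∑ i, Yl i ω} with hBdef
  have hAmeas : MeasurableSet A :=
    measurableSet_le measurable_const (Finset.measurable_sum _ fun i _ => hYu_meas i)
  have hBmeas : MeasurableSet B :=
    measurableSet_le measurable_const (Finset.measurable_sum _ fun i _ => hYl_meas i)
  -- the good event contains the complement
  have hsub : (A ∪ B)ᶜ ⊆ {ω | |empMed (fun i => X i ω) - θ| ≤ t} := by
    intro ω hω
    simp only [Set.mem_compl_iff, Set.mem_union, hAdef, hBdef, Set.mem_setOf_eq, not_or,
      not_le] at hω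
    obtain ⟨hωA, hωB⟩ := hω
    refine empMed_close hn (fun i => X i ω) θ t ht0.le ?_ ?_
    · rw [← Finset.sum_boole]; exact hωA
    · rw [← Finset.sum_boole]; exact hωB
  -- finish
  have h1 : (μ ((A ∪ B)ᶜ)).toReal ≤ (μ {ω | |empMed (fun i => X i ω) - θ| ≤ t}).toReal :=
    ENNReal.toReal_mono (measure_ne_top _ _) (measure_mono hsub)
  have h2 : (μ ((A ∪ B)ᶜ)).toReal = 1 - (μ (A ∪ B)).toReal := by
    rw [prob_compl_eq_one_sub (hAmeas.union hBmeas),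
      ENNReal.toReal_sub_of_le prob_le_one ENNReal.one_ne_top, ENNReal.toReal_one]
  have h3 : (μ (A ∪ B)).toReal ≤ (μ A).toReal + (μ B).toReal := by
    rw [← ENNReal.toReal_add (measure_ne_top _ _) (measure_ne_top _ _)]
    exact ENNReal.toReal_mono (by simp [measure_ne_top]) (measure_union_le A B)
  linarith
end

section
/- Let n be a positive integer, let Δ > 0, and let p_1, …, p_n be such that p_i ∈ [1/4, 3/4] and p_i + Δ ∈ [1/4, 3/4] for every i. Let P be the law of (V_1,…,V_n) where the V_i are independent Bernoulli of parameter p_i, and let Q be the law of (W_1,…,W_n) where the W_i are independent Bernoulli of parameter p_i + Δ. Then the total variation distance satisfies d_TV(P, Q) ≤ 1 − (1/2)·exp(−(16/3)·n·Δ²). -/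
open MeasureTheory ProbabilityTheory Real

/-- The Bernoulli distribution of parameter `p` as a measure on `ℝ`: it puts mass `p` at `1`
and mass `1 - p` at `0`. -/
noncomputable def bernoulliMeasure (p : ℝ) : Measure ℝ :=
  ENNReal.ofReal p • Measure.dirac (1 : ℝ) + ENNReal.ofReal (1 - p) • Measure.dirac (0 : ℝ)

noncomputable def bw (p : ℝ) (b : Bool) : ℝ := if b then p else 1 - p

noncomputable def bpt (b : Bool) : ℝ := if b then 1 else 0

instance bernoulliMeasure.isFiniteMeasure (p : ℝ) : IsFiniteMeasure (bernoulliMeasure p) := by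
  constructor
  simp only [_root_.bernoulliMeasure, Measure.coe_add, Measure.coe_smul, Pi.add_apply, Pi.smul_apply,
    measure_univ, smul_eq_mul, mul_one]
  exact ENNReal.add_lt_top.mpr ⟨ENNReal.ofReal_lt_top, ENNReal.ofReal_lt_top⟩

lemma pi_bern (n : ℕ) (p : Fin n → ℝ) :
    Measure.pi (fun i => bernoulliMeasure (p i)) =
      ∑ f : Fin n → Bool, (∏ i, ENNReal.ofReal (bw (p i) (f i))) •
        Measure.dirac (fun i => bpt (f i)) := by
  classical
  refine Measure.pi_eq fun s hs => ?_
  simp only [Measure.coe_finset_sum, Finset.sum_apply, Measure.coe_smul, Pi.smul_apply,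
    smul_eq_mul, Measure.dirac_apply' _ (MeasurableSet.univ_pi hs), Set.indicator_apply,
    Set.mem_univ_pi, Pi.one_apply, mul_ite, mul_one, mul_zero]
  have hterm : ∀ f : Fin n → Bool,
      (if ∀ i, bpt (f i) ∈ s i then ∏ i, ENNReal.ofReal (bw (p i) (f i)) else 0)
        = ∏ i, (ENNReal.ofReal (bw (p i) (f i)) * if bpt (f i) ∈ s i then 1 else 0) := by
    intro f
    rw [Finset.prod_mul_distrib, Finset.prod_boole]
    simp only [Finset.mem_univ, forall_true_left]
    split <;> simp
  rw [Finset.sum_congr rfl fun f _ => hterm f, ← Fintype.piFinset_univ,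
    ← Finset.prod_univ_sum (fun _ => (Finset.univ : Finset Bool))
      (fun i b => ENNReal.ofReal (bw (p i) b) * if bpt b ∈ s i then 1 else 0)]
  refine Finset.prod_congr rfl fun i _ => ?_
  rw [Fintype.sum_bool]
  simp only [_root_.bernoulliMeasure, bw, bpt, Measure.coe_add, Measure.coe_smul, Pi.add_apply,
    Pi.smul_apply, smul_eq_mul, Measure.dirac_apply' _ (hs i), Set.indicator_apply,
    Pi.one_apply, if_true, if_false, mul_ite, mul_one, mul_zero]
  norm_num

open scoped Classical in
lemma pi_bern_apply_toReal (n : ℕ) (p : Fin n → ℝ) (hp : ∀ i, 0 ≤ p i ∧ p i ≤ 1)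
    (A : Set (Fin n → ℝ)) (hA : MeasurableSet A) :
    ((Measure.pi fun i => bernoulliMeasure (p i)) A).toReal
      = ∑ f : Fin n → Bool, if (fun i => bpt (f i)) ∈ A then ∏ i, bw (p i) (f i) else 0 := by
  classical
  rw [pi_bern]
  simp only [Measure.coe_finset_sum, Finset.sum_apply, Measure.coe_smul, Pi.smul_apply,
    smul_eq_mul, Measure.dirac_apply' _ hA, Set.indicator_apply, Pi.one_apply,
    mul_ite, mul_one, mul_zero]
  rw [ENNReal.toReal_sum]
  · refine Finset.sum_congr rfl fun f _ => ?_
    split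
    · rw [ENNReal.toReal_prod]
      refine Finset.prod_congr rfl fun i _ => ENNReal.toReal_ofReal ?_
      unfold bw; split
      · exact (hp i).1
      · linarith [(hp i).2]
    · simp
  · intro f _
    split
    · exact (ENNReal.prod_lt_top fun i _ => ENNReal.ofReal_lt_top).ne
    · simp

set_option maxHeartbeats 1000000 in
lemma bc_coord (p Δ : ℝ) (h1 : 1/4 ≤ p) (h2 : p + Δ ≤ 3/4) (h3 : 0 < Δ) :
    Real.exp (-(8/3) * Δ^2) ≤ Real.sqrt (p*(p+Δ)) + Real.sqrt ((1-p)*(1-p-Δ)) := by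
  have hΔle : Δ ≤ 1/2 := by linarith
  set u := Real.sqrt (p*(p+Δ)) with hu
  set v := Real.sqrt ((1-p)*(1-p-Δ)) with hv
  have hu0 : 0 ≤ u := Real.sqrt_nonneg _
  have hv0 : 0 ≤ v := Real.sqrt_nonneg _
  have hu2 : u^2 = p*(p+Δ) := Real.sq_sqrt (by nlinarith)
  have hv2 : v^2 = (1-p)*(1-p-Δ) := Real.sq_sqrt (by nlinarith)
  have hm1 : (0:ℝ) < p + Δ/2 := by linarith
  have hm2 : (0:ℝ) < 1 - p - Δ/2 := by linarith
  have hule : u ≤ p + Δ/2 := by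
    have h := Real.sqrt_le_sqrt (show p*(p+Δ) ≤ (p+Δ/2)^2 by nlinarith)
    rwa [Real.sqrt_sq hm1.le] at h
  have hvle : v ≤ 1 - p - Δ/2 := by
    have h := Real.sqrt_le_sqrt (show (1-p)*(1-p-Δ) ≤ (1-p-Δ/2)^2 by nlinarith)
    rwa [Real.sqrt_sq hm2.le] at h
  have hum : p*(p+Δ) ≤ u * (p + Δ/2) := by nlinarith [mul_le_mul_of_nonneg_left hule hu0]
  have hvm : (1-p)*(1-p-Δ) ≤ v * (1 - p - Δ/2) := by
    nlinarith [mul_le_mul_of_nonneg_left hvle hv0]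
  have hmm : (3:ℝ)/16 ≤ (p + Δ/2) * (1 - p - Δ/2) := by
    nlinarith [mul_nonneg (show (0:ℝ) ≤ p + Δ/2 - 1/4 by linarith)
      (show (0:ℝ) ≤ 3/4 - (p + Δ/2) by linarith)]
  have hmm' : (0:ℝ) ≤ Δ^2 * ((p + Δ/2) * (1 - p - Δ/2) - 3/16) :=
    mul_nonneg (sq_nonneg Δ) (by linarith)
  have hfin : (1 - (4/3) * Δ^2) * ((p + Δ/2) * (1 - p - Δ/2))
      ≤ (u + v) * ((p + Δ/2) * (1 - p - Δ/2)) := by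
    nlinarith [mul_le_mul_of_nonneg_right hum hm2.le, mul_le_mul_of_nonneg_right hvm hm1.le]
  have hmain : 1 - (4/3) * Δ^2 ≤ u + v :=
    le_of_mul_le_mul_right hfin (mul_pos hm1 hm2)
  have hexp : Real.exp (-(8/3) * Δ^2) ≤ 1 - (4/3) * Δ^2 := by
    have h1e : (0:ℝ) < (8/3) * Δ^2 + 1 := by positivity
    have h2e : (8/3) * Δ^2 + 1 ≤ Real.exp ((8/3) * Δ^2) := Real.add_one_le_exp _
    have h3e : Real.exp (-(8/3) * Δ^2) = 1 / Real.exp ((8/3) * Δ^2) := by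
      rw [neg_mul, Real.exp_neg]; ring
    rw [h3e]
    have h4e : 1 / Real.exp ((8/3)*Δ^2) ≤ 1 / ((8/3) * Δ^2 + 1) :=
      one_div_le_one_div_of_le h1e h2e
    refine h4e.trans ?_
    rw [div_le_iff₀ h1e]
    nlinarith [mul_nonneg (sq_nonneg Δ) (show (0:ℝ) ≤ 4/3 - 32/9 * Δ^2 by nlinarith)]
  linarith

lemma sqrt_prod' {ι : Type*} (s : Finset ι) (f : ι → ℝ) (h : ∀ i ∈ s, 0 ≤ f i) :
    Real.sqrt (∏ i ∈ s, f i) = ∏ i ∈ s, Real.sqrt (f i) := by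
  classical
  induction s using Finset.cons_induction with
  | empty => simp
  | cons a s ha ih =>
    rw [Finset.prod_cons, Finset.prod_cons, Real.sqrt_mul (h a (Finset.mem_cons_self a s)),
      ih fun i hi => h i (Finset.mem_cons_of_mem hi)]

lemma key_tv {ι : Type*} [Fintype ι] (Q R : ι → ℝ) (hQ0 : ∀ f, 0 ≤ Q f) (hR0 : ∀ f, 0 ≤ R f)
    (hQ1 : ∑ f, Q f = 1) (hR1 : ∑ f, R f = 1) {B : ℝ} (hB0 : 0 ≤ B)
    (hB : B ≤ ∑ f, Real.sqrt (Q f * R f)) (g : ι → Prop) [DecidablePred g] :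
    |(∑ f, if g f then Q f else 0) - (∑ f, if g f then R f else 0)| ≤ 1 - B^2/2 := by
  classical
  set M := fun f => min (Q f) (R f) with hM
  have hM0 : ∀ f, 0 ≤ M f := fun f => le_min (hQ0 f) (hR0 f)
  have habs : |(∑ f, if g f then Q f else 0) - (∑ f, if g f then R f else 0)|
      ≤ 1 - ∑ f, M f := by
    rw [abs_le]
    constructor
    · have h1 : ∑ f, (R f - M f) = 1 - ∑ f, M f := by rw [Finset.sum_sub_distrib, hR1]
      have h2 : (∑ f, if g f then R f else 0) - (∑ f, if g f then Q f else 0)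
          ≤ ∑ f, (R f - M f) := by
        rw [← Finset.sum_sub_distrib]
        refine Finset.sum_le_sum fun f _ => ?_
        split
        · simp only [hM]
          have := min_le_left (Q f) (R f); linarith [this]
        · linarith [hM0 f, hR0 f, min_le_right (Q f) (R f)]
      linarith
    · have h1 : ∑ f, (Q f - M f) = 1 - ∑ f, M f := by rw [Finset.sum_sub_distrib, hQ1]
      have h2 : (∑ f, if g f then Q f else 0) - (∑ f, if g f then R f else 0)
          ≤ ∑ f, (Q f - M f) := by
        rw [← Finset.sum_sub_distrib]
        refine Finset.sum_le_sum fun f _ => ?_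
        split
        · linarith [min_le_right (Q f) (R f)]
        · linarith [hM0 f, min_le_left (Q f) (R f)]
      linarith
  have hCS : B^2 ≤ 2 * ∑ f, M f := by
    set N := fun f => max (Q f) (R f) with hN
    have hprod : ∀ f, Real.sqrt (Q f * R f) = Real.sqrt (M f) * Real.sqrt (N f) := by
      intro f
      rw [← Real.sqrt_mul (hM0 f), min_mul_max]
    have hcs := Finset.sum_mul_sq_le_sq_mul_sq Finset.univ (fun f => Real.sqrt (M f))
      (fun f => Real.sqrt (N f))
    have hsqM : ∀ f, Real.sqrt (M f) ^ 2 = M f := fun f => Real.sq_sqrt (hM0 f)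
    have hsqN : ∀ f, Real.sqrt (N f) ^ 2 = N f := fun f =>
      Real.sq_sqrt ((hM0 f).trans (min_le_max))
    simp only [hsqM, hsqN] at hcs
    have hNsum : ∑ f, N f = 2 - ∑ f, M f := by
      have : ∀ f, N f = Q f + R f - M f := by
        intro f
        have := min_add_max (Q f) (R f)
        simp only [hM, hN]; linarith [this]
      rw [Finset.sum_congr rfl fun f _ => this f]
      rw [Finset.sum_sub_distrib, Finset.sum_add_distrib, hQ1, hR1]
      ring
    have hBsq : B^2 ≤ (∑ f, Real.sqrt (Q f * R f))^2 := by
      have h := Finset.sum_nonneg fun f (_ : f ∈ Finset.univ) => Real.sqrt_nonneg (Q f * R f)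
      nlinarith
    have heq : (∑ f, Real.sqrt (Q f * R f)) = ∑ f, Real.sqrt (M f) * Real.sqrt (N f) :=
      Finset.sum_congr rfl fun f _ => hprod f
    rw [heq] at hBsq
    have hMsum0 : 0 ≤ ∑ f, M f := Finset.sum_nonneg fun f _ => hM0 f
    nlinarith
  linarith

set_option maxHeartbeats 1000000 in
/-- **Total variation bound between shifted products of Bernoulli laws.**
If `p_i ∈ [1/4, 3/4]` and `p_i + Δ ∈ [1/4, 3/4]` for all `i`, `Δ > 0`, `P` is the joint
law of `n` independent Bernoulli(`p_i`) random variables, and `Q` is the joint law of `n`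
independent Bernoulli(`p_i + Δ`) random variables, then
`d_TV(P, Q) = sup_A |P(A) - Q(A)| ≤ 1 - (1/2) exp(-(16/3) n Δ²)`. -/
theorem total_variation_shifted_bernoulli_products
    (n : ℕ) (hn : 0 < n) (Δ : ℝ) (hΔ : 0 < Δ)
    (p : Fin n → ℝ) (hp : ∀ i, p i ∈ Set.Icc (1 / 4 : ℝ) (3 / 4))
    (hpΔ : ∀ i, p i + Δ ∈ Set.Icc (1 / 4 : ℝ) (3 / 4))
    (A : Set (Fin n → ℝ)) (hA : MeasurableSet A) :
    |((Measure.pi fun i => bernoulliMeasure (p i)) A).toReal -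
        ((Measure.pi fun i => bernoulliMeasure (p i + Δ)) A).toReal|
      ≤ 1 - 1 / 2 * Real.exp (-(16 / 3) * n * Δ ^ 2) := by
  classical
  have hp01 : ∀ i, 0 ≤ p i ∧ p i ≤ 1 := fun i =>
    ⟨by linarith [(hp i).1], by linarith [(hp i).2]⟩
  have hq01 : ∀ i, 0 ≤ p i + Δ ∧ p i + Δ ≤ 1 := fun i =>
    ⟨by linarith [(hpΔ i).1], by linarith [(hpΔ i).2]⟩
  rw [pi_bern_apply_toReal n p hp01 A hA, pi_bern_apply_toReal n (fun i => p i + Δ) hq01 A hA]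
  have swap : ∀ w : Fin n → Bool → ℝ,
      ∑ f : Fin n → Bool, ∏ i, w i (f i) = ∏ i, (w i true + w i false) := by
    intro w
    rw [← Fintype.piFinset_univ, ← Finset.prod_univ_sum (fun _ => (Finset.univ : Finset Bool)) w]
    exact Finset.prod_congr rfl fun i _ => Fintype.sum_bool _
  set Q := fun f : Fin n → Bool => ∏ i, bw (p i) (f i) with hQdef
  set R := fun f : Fin n → Bool => ∏ i, bw (p i + Δ) (f i) with hRdef
  have hbwQ : ∀ i b, 0 ≤ bw (p i) b := by
    intro i b; unfold bw; split
    · exact (hp01 i).1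
    · linarith [(hp01 i).2]
  have hbwR : ∀ i b, 0 ≤ bw (p i + Δ) b := by
    intro i b; unfold bw; split
    · exact (hq01 i).1
    · linarith [(hq01 i).2]
  have hQ0 : ∀ f, 0 ≤ Q f := fun f => Finset.prod_nonneg fun i _ => hbwQ i (f i)
  have hR0 : ∀ f, 0 ≤ R f := fun f => Finset.prod_nonneg fun i _ => hbwR i (f i)
  have hQ1 : ∑ f, Q f = 1 := by
    rw [hQdef, swap]
    exact Finset.prod_eq_one fun i _ => by unfold bw; norm_num
  have hR1 : ∑ f, R f = 1 := by
    rw [hRdef, swap]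
    exact Finset.prod_eq_one fun i _ => by unfold bw; norm_num
  set B := Real.exp ((n : ℝ) * (-(8/3) * Δ^2)) with hBdef
  have hB : B ≤ ∑ f, Real.sqrt (Q f * R f) := by
    have h1 : ∀ f : Fin n → Bool, Real.sqrt (Q f * R f)
        = ∏ i, Real.sqrt (bw (p i) (f i) * bw (p i + Δ) (f i)) := by
      intro f
      rw [hQdef, hRdef, ← Finset.prod_mul_distrib,
        sqrt_prod' _ _ fun i _ => mul_nonneg (hbwQ i (f i)) (hbwR i (f i))]
    rw [Finset.sum_congr rfl fun f _ => h1 f,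
      swap fun i b => Real.sqrt (bw (p i) b * bw (p i + Δ) b)]
    have h2 : ∀ i : Fin n, Real.exp (-(8/3) * Δ^2)
        ≤ Real.sqrt (bw (p i) true * bw (p i + Δ) true)
          + Real.sqrt (bw (p i) false * bw (p i + Δ) false) := by
      intro i
      have := bc_coord (p i) Δ (hp i).1 (hpΔ i).2 hΔ
      simpa [bw, show (1 : ℝ) - (p i + Δ) = 1 - p i - Δ by ring] using this
    calc B = ∏ _i : Fin n, Real.exp (-(8/3) * Δ^2) := by
              rw [Finset.prod_const, Finset.card_univ, Fintype.card_fin, hBdef,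
                Real.exp_nat_mul]
      _ ≤ _ := Finset.prod_le_prod (fun i _ => (Real.exp_pos _).le) fun i _ => h2 i
  have hkey := key_tv Q R hQ0 hR0 hQ1 hR1 (Real.exp_pos _).le hB
    (fun f => (fun i => bpt (f i)) ∈ A)
  have hB2 : B ^ 2 = Real.exp (-(16/3) * n * Δ^2) := by
    rw [hBdef, sq, ← Real.exp_add]
    congr 1
    ring
  rw [hB2] at hkey
  calc |(∑ f : Fin n → Bool, if (fun i => bpt (f i)) ∈ A then Q f else 0)
        - ∑ f : Fin n → Bool, if (fun i => bpt (f i)) ∈ A then R f else 0|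
      ≤ 1 - Real.exp (-(16/3) * n * Δ^2) / 2 := hkey
    _ ≤ 1 - 1 / 2 * Real.exp (-(16 / 3) * n * Δ ^ 2) := le_of_eq (by ring)
end

section
/- Let n ≥ 4 be an integer and let 0 < σ_1 ≤ σ_2 ≤ … ≤ σ_n. Then √n / ( Σ_{i=⌈√n⌉}^n σ_i^{-1} ) ≤ 2√2 · √( Σ_{i=1}^n σ_i² ) / n. -/
open Real Finset

lemma key_nat (n : ℕ) (hn : 4 ≤ n) : n ≤ 2 * (n + 1 - ⌈Real.sqrt n⌉₊) := by
  have hs : Nat.sqrt n ^ 2 ≤ n := Nat.sqrt_le' n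
  have hs2 : 2 ≤ Nat.sqrt n := Nat.le_sqrt.mpr (by omega)
  have hm : ⌈Real.sqrt n⌉₊ ≤ Nat.sqrt n + 1 := by
    rw [Nat.ceil_le]
    have h0 : n ≤ (Nat.sqrt n + 1)^2 := by
      have := Nat.lt_succ_sqrt' n
      nlinarith
    have h1 : (n:ℝ) ≤ ((Nat.sqrt n + 1 : ℕ):ℝ)^2 := by exact_mod_cast h0
    calc Real.sqrt n ≤ Real.sqrt (((Nat.sqrt n + 1:ℕ):ℝ)^2) := Real.sqrt_le_sqrt h1
      _ = ((Nat.sqrt n + 1:ℕ):ℝ) := Real.sqrt_sq (by positivity)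
  have h2s : 2 * Nat.sqrt n ≤ n := le_trans (by nlinarith) hs
  omega

/-- **Comparison of the median bound with the mean bound.**
For `n ≥ 4` and `0 < σ_1 ≤ … ≤ σ_n` (indexed from `1` to `n`),
`√n / ∑_{i=⌈√n⌉}^n σ_i⁻¹ ≤ 2√2 · √(∑_{i=1}^n σ_i²) / n`. -/
theorem median_bound_le_mean_bound
    (n : ℕ) (hn : 4 ≤ n) (σ : ℕ → ℝ)
    (hσpos : ∀ i ∈ Finset.Icc 1 n, 0 < σ i)
    (hσmono : ∀ i j, 1 ≤ i → i ≤ j → j ≤ n → σ i ≤ σ j) :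
    Real.sqrt n / ∑ i ∈ Finset.Icc ⌈Real.sqrt n⌉₊ n, (σ i)⁻¹
      ≤ 2 * Real.sqrt 2 * Real.sqrt (∑ i ∈ Finset.Icc 1 n, (σ i) ^ 2) / n := by
  have hkey := key_nat n hn
  set m := ⌈Real.sqrt n⌉₊ with hmdef
  have hn0 : (0:ℝ) < n := by exact_mod_cast (by omega : 0 < n)
  have hm1 : 1 ≤ m := Nat.ceil_pos.mpr (Real.sqrt_pos.mpr hn0)
  have hmn : m ≤ n := by omega
  set A := Finset.Icc m n with hA
  have hsub : A ⊆ Finset.Icc 1 n := Finset.Icc_subset_Icc hm1 le_rfl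
  have hpos : ∀ i ∈ A, 0 < σ i := fun i hi => hσpos i (hsub hi)
  have hcard : A.card = n + 1 - m := Nat.card_Icc m n
  set k : ℕ := n + 1 - m with hk
  have hk1 : 1 ≤ k := by omega
  have hKpos : (0:ℝ) < k := by exact_mod_cast hk1
  have hAne : A.Nonempty := Finset.nonempty_Icc.mpr hmn
  set S := ∑ i ∈ A, (σ i)⁻¹ with hS
  set T := ∑ i ∈ A, σ i with hT
  set Q := ∑ i ∈ Finset.Icc 1 n, σ i ^ 2 with hQ
  have hSpos : 0 < S := Finset.sum_pos (fun i hi => inv_pos.mpr (hpos i hi)) hAne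
  have hTpos : 0 < T := Finset.sum_pos hpos hAne
  have hQpos : 0 < Q :=
    Finset.sum_pos (fun i hi => pow_pos (hσpos i hi) 2)
      (Finset.nonempty_Icc.mpr (by omega))
  -- Cauchy–Schwarz 1 : k² ≤ S * T
  have c1 : (k:ℝ)^2 ≤ S * T := by
    have h := Finset.sum_sq_le_sum_mul_sum_of_sq_eq_mul A
      (r := fun _ => (1:ℝ)) (f := fun i => (σ i)⁻¹) (g := σ)
      (fun i hi => (inv_pos.mpr (hpos i hi)).le) (fun i hi => (hpos i hi).le)
      (fun i hi => by rw [inv_mul_cancel₀ (hpos i hi).ne']; norm_num)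
    simpa [hcard, hk] using h
  -- Cauchy–Schwarz 2 : T² ≤ k * Q
  have c2 : T^2 ≤ (k:ℝ) * Q := by
    have h := sq_sum_le_card_mul_sum_sq (s := A) (f := σ)
    have hsub2 : ∑ i ∈ A, σ i ^ 2 ≤ Q :=
      Finset.sum_le_sum_of_subset_of_nonneg hsub (fun i _ _ => sq_nonneg _)
    calc T^2 ≤ (A.card : ℝ) * ∑ i ∈ A, σ i ^ 2 := h
      _ = (k:ℝ) * ∑ i ∈ A, σ i ^ 2 := by rw [hcard]
      _ ≤ (k:ℝ) * Q := by
          exact mul_le_mul_of_nonneg_left hsub2 hKpos.le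
  have h3 : (n:ℝ) ≤ 2 * (k:ℝ) := by exact_mod_cast hkey
  -- assemble
  have hTle : T ≤ Real.sqrt k * Real.sqrt Q := by
    rw [← Real.sqrt_mul hKpos.le]
    exact (Real.le_sqrt hTpos.le (by positivity)).mpr c2
  have hnle : Real.sqrt n ≤ Real.sqrt 2 * Real.sqrt k := by
    rw [← Real.sqrt_mul (by norm_num : (0:ℝ) ≤ 2)]
    exact Real.sqrt_le_sqrt h3
  have hmain : Real.sqrt n * n * T ≤ 2 * Real.sqrt 2 * Real.sqrt Q * (k:ℝ)^2 := by
    calc Real.sqrt n * n * T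
        ≤ (Real.sqrt 2 * Real.sqrt k) * (2*(k:ℝ)) * (Real.sqrt k * Real.sqrt Q) := by
          apply mul_le_mul (mul_le_mul hnle h3 hn0.le (by positivity)) hTle hTpos.le
          positivity
      _ = 2 * Real.sqrt 2 * Real.sqrt Q * (Real.sqrt k * Real.sqrt k) * (k:ℝ) := by ring
      _ = 2 * Real.sqrt 2 * Real.sqrt Q * (k:ℝ)^2 := by
          rw [Real.mul_self_sqrt hKpos.le]; ring
  rw [div_le_div_iff₀ hSpos hn0]
  have hstep1 : (k:ℝ)^2 / T ≤ S := by rw [div_le_iff₀ hTpos]; exact c1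
  calc Real.sqrt n * n ≤ 2 * Real.sqrt 2 * Real.sqrt Q * ((k:ℝ)^2 / T) := by
        rw [← mul_div_assoc, le_div_iff₀ hTpos]; exact hmain
    _ ≤ 2 * Real.sqrt 2 * Real.sqrt Q * S := by
        exact mul_le_mul_of_nonneg_left hstep1 (by positivity)
end
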